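/- Let σ ∈ C¹(Ω, Ω) be a measure-preserving reversibility of ż = F(z), and let γ be a cycle (closed orbit) of the system with σ(γ) = γ, containing a point z with σ(z) ≠ z. Then γ contains at least two distinct points where div F vanishes. -/

import Mathlib

open MeasureTheory Set
open scoped ContDiff

theorem ibp {m : ℕ} (Ω : Set (Fin (m+1) → ℝ)) (hΩ : IsOpen Ω)
    (F : (Fin (m+1) → ℝ) → (Fin (m+1) → ℝ)) (hF : ContDiffOn ℝ 1 F Ω)
    (ψ : (Fin (m+1) → ℝ) → ℝ) (ψ' : (Fin (m+1) → ℝ) → ((Fin (m+1) → ℝ) →L[ℝ] ℝ))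
    (hψd : ∀ x, HasFDerivAt ψ (ψ' x) x) (hψ'c : Continuous ψ')
    (hsupp : IsCompact (tsupport ψ)) (hsub : tsupport ψ ⊆ Ω) :
    ∫ x in Ω, (ψ x * (∑ i, fderiv ℝ F x (Pi.single i 1) i)
      + ∑ i, F x i * ψ' x (Pi.single i 1)) = 0 := by
  classical
  set G : (Fin (m+1) → ℝ) → (Fin (m+1) → ℝ) := fun x => ψ x • F x with hG_def
  set G' : (Fin (m+1) → ℝ) → ((Fin (m+1) → ℝ) →L[ℝ] (Fin (m+1) → ℝ)) := fun x =>
    if x ∈ Ω then ψ x • fderiv ℝ F x + (ψ' x).smulRight (F x) else 0 with hG'_def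
  have hψc : Continuous ψ := continuous_iff_continuousAt.2
    fun x => (hψd x).differentiableAt.continuousAt
  have hFd : ∀ x ∈ Ω, HasFDerivAt F (fderiv ℝ F x) x := fun x hx =>
    ((hF.differentiableOn one_ne_zero).differentiableAt (hΩ.mem_nhds hx)).hasFDerivAt
  have hψ0 : ∀ x ∉ tsupport ψ, ψ x = 0 := fun x hx => image_eq_zero_of_notMem_tsupport hx
  have hψev : ∀ x ∉ tsupport ψ, ψ =ᶠ[nhds x] 0 := by
    intro x hx
    filter_upwards [(isClosed_tsupport ψ).isOpen_compl.mem_nhds hx] with y hy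
    exact hψ0 y hy
  have hψ'0 : ∀ x ∉ tsupport ψ, ψ' x = 0 := by
    intro x hx
    have h0 : HasFDerivAt ψ (0 : (Fin (m+1) → ℝ) →L[ℝ] ℝ) x :=
      (hasFDerivAt_const (0:ℝ) x).congr_of_eventuallyEq (hψev x hx)
    exact (hψd x).unique h0
  have hGev : ∀ x ∉ tsupport ψ, G =ᶠ[nhds x] 0 := by
    intro x hx
    filter_upwards [(isClosed_tsupport ψ).isOpen_compl.mem_nhds hx] with y hy
    simp [hG_def, hψ0 y hy]
  have hG : ∀ x, HasFDerivAt G (G' x) x := by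
    intro x
    by_cases hx : x ∈ Ω
    · have := (hψd x).smul (hFd x hx)
      simp only [hG'_def, if_pos hx]; exact this
    · have hx' : x ∉ tsupport ψ := fun h => hx (hsub h)
      have : HasFDerivAt G (0 : (Fin (m+1) → ℝ) →L[ℝ] (Fin (m+1) → ℝ)) x :=
        (hasFDerivAt_const (0 : Fin (m+1) → ℝ) x).congr_of_eventuallyEq (hGev x hx')
      simpa [hG'_def, if_neg hx] using this
  have hG'0 : ∀ x ∉ tsupport ψ, G' x = 0 := by
    intro x hx
    by_cases hxΩ : x ∈ Ω
    · have hz : ContinuousLinearMap.smulRight (0 : (Fin (m+1) → ℝ) →L[ℝ] ℝ) (F x) = 0 := by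
        ext y; simp
      simp [hG'_def, if_pos hxΩ, hψ0 x hx, hψ'0 x hx, hz]
    · simp [hG'_def, if_neg hxΩ]
  have hG'c : Continuous G' := by
    rw [continuous_iff_continuousAt]
    intro x
    by_cases hx : x ∈ Ω
    · have hf' : ContinuousAt (fderiv ℝ F) x :=
        (hF.continuousOn_fderiv_of_isOpen hΩ le_rfl).continuousAt (hΩ.mem_nhds hx)
      have hFc : ContinuousAt F x := hF.continuousOn.continuousAt (hΩ.mem_nhds hx)
      have h1 : ContinuousAt (fun y => ψ y • fderiv ℝ F y + (ψ' y).smulRight (F y)) x := by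
        apply ContinuousAt.add
        · exact hψc.continuousAt.smul hf'
        · exact (isBoundedBilinearMap_smulRight (𝕜 := ℝ)).continuous.continuousAt.comp
            (hψ'c.continuousAt.prodMk hFc)
      apply h1.congr
      filter_upwards [hΩ.mem_nhds hx] with y hy
      simp [hG'_def, if_pos hy]
    · have hx' : x ∉ tsupport ψ := fun h => hx (hsub h)
      apply continuousAt_const.congr
      filter_upwards [(isClosed_tsupport ψ).isOpen_compl.mem_nhds hx'] with y hy
      rw [hG'0 y hy]
  set d : (Fin (m+1) → ℝ) → ℝ := fun x => ∑ i, G' x (Pi.single i 1) i with hd_def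
  have hdc : Continuous d := by
    apply continuous_finset_sum
    intro i _
    have h4 : Continuous fun a => G' a (Pi.single i (1:ℝ)) := hG'c.clm_apply continuous_const
    exact (continuous_apply i).comp h4
  have hd0 : ∀ x ∉ tsupport ψ, d x = 0 := by
    intro x hx; simp [hd_def, hG'0 x hx]
  have hdi : Integrable d := hdc.integrable_of_hasCompactSupport
    (HasCompactSupport.intro hsupp hd0)
  obtain ⟨R, hR0, hRsub⟩ : ∃ R, 0 < R ∧ tsupport ψ ⊆ Metric.ball 0 R :=
    let ⟨r, hr, hsub'⟩ := hsupp.isBounded.subset_ball_lt 0 0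
    ⟨r, hr, hsub'⟩
  have hnorm : ∀ x : Fin (m+1) → ℝ, ∀ i, R ≤ |x i| → x ∉ tsupport ψ := by
    intro x i hi hx
    have := hRsub hx
    rw [mem_ball_zero_iff] at this
    have h2 : |x i| ≤ ‖x‖ := by
      simpa [Real.norm_eq_abs] using norm_le_pi_norm x i
    linarith
  set a : Fin (m+1) → ℝ := fun _ => -R with ha_def
  set b : Fin (m+1) → ℝ := fun _ => R with hb_def
  have hab : a ≤ b := fun i => by simp [ha_def, hb_def]; linarith
  have key := integral_divergence_of_hasFDerivAt_off_countable a b hab G G' ∅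
    countable_empty
    (continuous_iff_continuousAt.2 fun x => (hG x).differentiableAt.continuousAt).continuousOn
    (fun x _ => hG x) hdi.integrableOn
  have hfaces : ∀ (i : Fin (m+1)) (c : ℝ), |c| = R →
      ∀ y : Fin m → ℝ, G (i.insertNth c y) = 0 := by
    intro i c hc y
    have h5 : (i.insertNth c y : Fin (m+1) → ℝ) i = c := by simp
    have hns : i.insertNth c y ∉ tsupport ψ := hnorm _ i (by rw [h5, hc])
    simp [hG_def, hψ0 _ hns]
  have hface0 : ∀ i : Fin (m+1),
      ((∫ x in Icc (a ∘ i.succAbove) (b ∘ i.succAbove), G (i.insertNth (b i) x) i)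
        - ∫ x in Icc (a ∘ i.succAbove) (b ∘ i.succAbove), G (i.insertNth (a i) x) i) = 0 := by
    intro i
    have h1 : ∀ x, G (i.insertNth (b i) x) i = 0 := by
      intro x; rw [hfaces i (b i) (by simp [hb_def, abs_of_pos hR0]) x]; rfl
    have h2 : ∀ x, G (i.insertNth (a i) x) i = 0 := by
      intro x; rw [hfaces i (a i) (by simp [ha_def, abs_of_pos hR0]) x]; rfl
    simp [h1, h2]
  rw [Finset.sum_congr rfl (fun i _ => hface0 i), Finset.sum_const_zero] at key
  -- key : ∫ x in Icc a b, ∑ i, G' x (Pi.single i 1) i = 0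
  have hIccd : ∀ x ∉ Icc a b, d x = 0 := by
    intro x hx
    rw [Set.mem_Icc] at hx
    have : ∃ i, R ≤ |x i| := by
      by_contra hcon
      push_neg at hcon
      exact hx ⟨fun i => by have := hcon i; rw [abs_lt] at this; simp [ha_def]; linarith,
        fun i => by have := hcon i; rw [abs_lt] at this; simp [hb_def]; linarith⟩
    obtain ⟨i, hi⟩ := this
    exact hd0 x (hnorm x i hi)
  have h1 : ∫ x in Icc a b, d x = ∫ x, d x :=
    setIntegral_eq_integral_of_forall_compl_eq_zero hIccd
  have h2 : ∫ x in Ω, d x = ∫ x, d x :=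
    setIntegral_eq_integral_of_forall_compl_eq_zero
      (fun x hx => hd0 x (fun h => hx (hsub h)))
  have h3 : ∫ x in Ω, d x = 0 := by rw [h2, ← h1]; exact key
  rw [← h3]
  apply setIntegral_congr_fun hΩ.measurableSet
  intro x hx
  simp only [hd_def, hG'_def, if_pos hx, ContinuousLinearMap.add_apply,
    ContinuousLinearMap.coe_smul', Pi.smul_apply, ContinuousLinearMap.smulRight_apply,
    Pi.add_apply, smul_eq_mul, Finset.sum_add_distrib, Finset.mul_sum]
  congr 1
  exact Finset.sum_congr rfl fun i _ => mul_comm _ _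

theorem absdet {n : ℕ} (Ω : Set (Fin n → ℝ)) (hΩ : IsOpen Ω)
    (σ : (Fin n → ℝ) → (Fin n → ℝ)) (hσC1 : ContDiffOn ℝ 1 σ Ω)
    (hσinj : Set.InjOn σ Ω)
    (hmeas : ∀ A ⊆ Ω, MeasurableSet A → volume (σ '' A) = volume A) :
    ∀ x ∈ Ω, |(fderiv ℝ σ x).det| = 1 := by
  have hd : ∀ x ∈ Ω, HasFDerivAt σ (fderiv ℝ σ x) x := fun x hx =>
    ((hσC1.differentiableOn one_ne_zero).differentiableAt (hΩ.mem_nhds hx)).hasFDerivAt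
  set u : (Fin n → ℝ) → ℝ := fun x => |(fderiv ℝ σ x).det| with hu_def
  have hu : ContinuousOn u Ω := by
    apply (continuous_abs.comp ContinuousLinearMap.continuous_det).comp_continuousOn
    exact hσC1.continuousOn_fderiv_of_isOpen hΩ le_rfl
  have hball : ∀ x ∈ Ω, ∀ r > 0, Metric.closedBall x r ⊆ Ω →
      ∫ y in Metric.closedBall x r, u y = (volume (Metric.closedBall x r)).toReal := by
    intro x hx r hr hsub
    have hBmeas : MeasurableSet (Metric.closedBall x r) := measurableSet_closedBall
    have key := integral_image_eq_integral_abs_det_fderiv_smul volume hBmeas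
      (fun y hy => (hd y (hsub hy)).hasFDerivWithinAt) (hσinj.mono hsub) (fun _ => (1:ℝ))
    have hv : volume (σ '' Metric.closedBall x r) = volume (Metric.closedBall x r) :=
      hmeas _ hsub hBmeas
    simp only [setIntegral_const, smul_eq_mul, mul_one] at key
    rw [measureReal_def, hv] at key
    rw [← key]
  intro x hx
  by_contra hne
  set c := u x with hc_def
  have hcnn : 0 ≤ c := abs_nonneg _
  have hcne : c ≠ 1 := hne
  have hεpos : 0 < |c - 1| / 2 := by
    have : c - 1 ≠ 0 := sub_ne_zero.2 hcne
    positivity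
  have hcont : ContinuousAt u x := hu.continuousAt (hΩ.mem_nhds hx)
  have hnb : ∀ᶠ y in nhds x, y ∈ Ω ∧ |u y - c| < |c - 1| / 2 := by
    have h1 : ∀ᶠ y in nhds x, |u y - c| < |c - 1| / 2 := by
      have := hcont (Metric.ball_mem_nhds c hεpos)
      filter_upwards [this] with y hy
      simpa [Real.dist_eq] using hy
    filter_upwards [hΩ.mem_nhds hx, h1] with y h2 h3 using ⟨h2, h3⟩
  obtain ⟨r, hr0, hrsub⟩ := (Metric.nhds_basis_closedBall.eventually_iff).1 hnb
  set B := Metric.closedBall x r with hB_def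
  have hBsubΩ : B ⊆ Ω := fun y hy => (hrsub hy).1
  have hint : ∫ y in B, u y = (volume B).toReal := hball x hx r hr0 hBsubΩ
  have hvol_pos : 0 < (volume B).toReal := by
    refine ENNReal.toReal_pos ?_ ?_
    · exact (Metric.measure_closedBall_pos volume x hr0).ne'
    · exact (isCompact_closedBall x r).measure_lt_top.ne
  have hui : IntegrableOn u B := (hu.mono hBsubΩ).integrableOn_compact (isCompact_closedBall x r)
  rcases lt_or_gt_of_ne hcne with hlt | hgt
  · -- c < 1 : u < (c+1)/2 < 1 on B
    have habs : |c - 1| = 1 - c := by rw [abs_of_neg (by linarith)]; ring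
    have hub : ∀ y ∈ B, u y ≤ (c+1)/2 := by
      intro y hy
      have := (hrsub hy).2
      rw [habs] at this
      have := abs_lt.1 this
      linarith [this.2]
    have hmono : ∫ y in B, u y ≤ ∫ y in B, ((c+1)/2 : ℝ) := by
      apply setIntegral_mono_on hui (integrableOn_const ?_) (by exact measurableSet_closedBall) hub
      exact (isCompact_closedBall x r).measure_lt_top.ne
    rw [hint, setIntegral_const, smul_eq_mul, measureReal_def] at hmono
    nlinarith
  · -- c > 1
    have habs : |c - 1| = c - 1 := abs_of_pos (by linarith)
    have hub : ∀ y ∈ B, ((c+1)/2 : ℝ) ≤ u y := by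
      intro y hy
      have := (hrsub hy).2
      rw [habs] at this
      have := abs_lt.1 this
      linarith [this.1]
    have hmono : ∫ y in B, ((c+1)/2 : ℝ) ≤ ∫ y in B, u y := by
      apply setIntegral_mono_on (integrableOn_const ?_) hui (by exact measurableSet_closedBall) hub
      exact (isCompact_closedBall x r).measure_lt_top.ne
    rw [hint, setIntegral_const, smul_eq_mul, measureReal_def] at hmono
    nlinarith

theorem cov {n : ℕ} (Ω : Set (Fin n → ℝ)) (hΩ : IsOpen Ω)
    (σ : (Fin n → ℝ) → (Fin n → ℝ)) (hσC1 : ContDiffOn ℝ 1 σ Ω)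
    (hmaps : Set.MapsTo σ Ω Ω) (hσinv : ∀ z ∈ Ω, σ (σ z) = z)
    (hmeas : ∀ A ⊆ Ω, MeasurableSet A → volume (σ '' A) = volume A)
    (g : (Fin n → ℝ) → ℝ) :
    ∫ x in Ω, g (σ x) = ∫ x in Ω, g x := by
  have hσinj : Set.InjOn σ Ω := fun a ha b hb hab => by
    have := congrArg σ hab; rwa [hσinv a ha, hσinv b hb] at this
  have himg : σ '' Ω = Ω := by
    apply Subset.antisymm
    · exact image_subset_iff.2 hmaps
    · intro w hw
      exact ⟨σ w, hmaps hw, hσinv w hw⟩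
  have hd : ∀ x ∈ Ω, HasFDerivWithinAt σ (fderiv ℝ σ x) Ω x := fun x hx =>
    (((hσC1.differentiableOn one_ne_zero).differentiableAt (hΩ.mem_nhds hx)).hasFDerivAt).hasFDerivWithinAt
  have key := integral_image_eq_integral_abs_det_fderiv_smul volume hΩ.measurableSet hd hσinj g
  rw [himg] at key
  rw [key]
  apply setIntegral_congr_fun hΩ.measurableSet
  intro x hx
  simp only []
  rw [absdet Ω hΩ σ hσC1 hσinj hmeas x hx, one_smul]

theorem weak_nonpos {n : ℕ} (Ω : Set (Fin n → ℝ)) (hΩ : IsOpen Ω)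
    (k : (Fin n → ℝ) → ℝ) (hk : ContinuousOn k Ω)
    (h : ∀ ψ : (Fin n → ℝ) → ℝ, ContDiff ℝ ∞ ψ → HasCompactSupport ψ → tsupport ψ ⊆ Ω →
      (∀ x, 0 ≤ ψ x) → ∫ x in Ω, ψ x * k x = 0)
    (x : Fin n → ℝ) (hx : x ∈ Ω) : ¬ (0 < k x) := by
  intro hpos
  have hs : Ω ∩ {y | k x / 2 < k y} ∈ nhds x := by
    apply Filter.inter_mem (hΩ.mem_nhds hx)
    exact (hk.continuousAt (hΩ.mem_nhds hx)).preimage_mem_nhds (Ioi_mem_nhds (by linarith))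
  obtain ⟨f, hfsub, hfcs, hfsm, hfrange, hfx⟩ := exists_contDiff_tsupport_subset (n := ⊤) hs
  have hfnonneg : ∀ y, 0 ≤ f y := fun y => (hfrange (mem_range_self y)).1
  have hsubΩ : tsupport f ⊆ Ω := hfsub.trans inter_subset_left
  have hzero : ∫ y in Ω, f y * k y = 0 := h f hfsm hfcs hsubΩ hfnonneg
  -- ball where f ≥ 1/2 and k ≥ k x / 2
  have hb : {y | 1/2 < f y} ∩ (Ω ∩ {y | k x / 2 < k y}) ∈ nhds x := by
    apply Filter.inter_mem _ hs
    apply (hfsm.continuous.continuousAt).preimage_mem_nhds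
    rw [hfx]; exact Ioi_mem_nhds (by norm_num)
  obtain ⟨r, hr0, hrsub⟩ := (Metric.nhds_basis_closedBall.mem_iff).1 hb
  set B := Metric.closedBall x r with hB_def
  have hBsubΩ : B ⊆ Ω := fun y hy => ((hrsub hy).2).1
  have hnonneg : ∀ y, 0 ≤ f y * k y := by
    intro y
    by_cases hfy : f y = 0
    · simp [hfy]
    · have hy : y ∈ tsupport f := subset_closure hfy
      have : k x / 2 < k y := (hfsub hy).2
      exact mul_nonneg (hfnonneg y) (by linarith)
  have hcont : Continuous fun y => f y * k y := by
    rw [continuous_iff_continuousAt]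
    intro y
    by_cases hy : y ∈ Ω
    · exact (hfsm.continuous.continuousAt).mul (hk.continuousAt (hΩ.mem_nhds hy))
    · have hy' : y ∉ tsupport f := fun hc => hy (hsubΩ hc)
      have hev : (fun w => f w * k w) =ᶠ[nhds y] fun _ => (0:ℝ) := by
        filter_upwards [(isClosed_tsupport f).isOpen_compl.mem_nhds hy'] with w hw
        simp [image_eq_zero_of_notMem_tsupport hw]
      exact ContinuousAt.congr continuousAt_const hev.symm
  have hint : Integrable fun y => f y * k y := by
    apply hcont.integrable_of_hasCompactSupport
    apply HasCompactSupport.intro hfcs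
    intro y hy
    simp [image_eq_zero_of_notMem_tsupport hy]
  have h1 : ∫ y in B, (k x/4 : ℝ) ≤ ∫ y in B, f y * k y := by
    apply setIntegral_mono_on
      (integrableOn_const (isCompact_closedBall x r).measure_lt_top.ne)
      hint.integrableOn measurableSet_closedBall
    intro y hy
    have h2 := (hrsub hy).1
    have h3 := ((hrsub hy).2).2
    simp only [mem_setOf_eq] at h2 h3
    nlinarith [hfnonneg y]
  have h2 : ∫ y in B, f y * k y ≤ ∫ y in Ω, f y * k y := by
    apply setIntegral_mono_set hint.integrableOn
      (Filter.Eventually.of_forall hnonneg)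
    exact HasSubset.Subset.eventuallyLE hBsubΩ
  have hvpos : 0 < (volume B).toReal :=
    ENNReal.toReal_pos (Metric.measure_closedBall_pos volume x hr0).ne'
      (isCompact_closedBall x r).measure_lt_top.ne
  rw [setIntegral_const, smul_eq_mul, measureReal_def] at h1
  rw [hzero] at h2
  nlinarith

theorem weak_zero {n : ℕ} (Ω : Set (Fin n → ℝ)) (hΩ : IsOpen Ω)
    (k : (Fin n → ℝ) → ℝ) (hk : ContinuousOn k Ω)
    (h : ∀ ψ : (Fin n → ℝ) → ℝ, ContDiff ℝ ∞ ψ → HasCompactSupport ψ → tsupport ψ ⊆ Ω →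
      (∀ x, 0 ≤ ψ x) → ∫ x in Ω, ψ x * k x = 0)
    (x : Fin n → ℝ) (hx : x ∈ Ω) : k x = 0 := by
  have hneg : ∀ ψ : (Fin n → ℝ) → ℝ, ContDiff ℝ ∞ ψ → HasCompactSupport ψ → tsupport ψ ⊆ Ω →
      (∀ x, 0 ≤ ψ x) → ∫ y in Ω, ψ y * (-(k y)) = 0 := by
    intro ψ h1 h2 h3 h4
    have : (fun y => ψ y * (-(k y))) = fun y => -(ψ y * k y) := by ext y; ring
    rw [this, integral_neg, h ψ h1 h2 h3 h4, neg_zero]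
  rcases lt_trichotomy (k x) 0 with hlt | heq | hgt
  · exfalso
    exact weak_nonpos Ω hΩ (fun y => -(k y)) hk.neg hneg x hx
      (by show (0:ℝ) < -(k x); linarith)
  · exact heq
  · exact absurd hgt (weak_nonpos Ω hΩ k hk h x hx)

/-- sum formula : ∑ i, v i * L eᵢ = L v -/
theorem sum_mul_apply {n : ℕ} (L : (Fin n → ℝ) →L[ℝ] ℝ) (v : Fin n → ℝ) :
    ∑ i, v i * L (Pi.single i 1) = L v := by
  have hv : v = ∑ i, v i • (Pi.single i 1 : Fin n → ℝ) := by
    funext j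
    rw [Finset.sum_apply]
    simp [Pi.single_apply]
  conv_rhs => rw [hv]
  rw [map_sum]
  exact Finset.sum_congr rfl fun i _ => by rw [L.map_smul]; rfl

/-- transferring integrability along σ -/
theorem cov_int {n : ℕ} (Ω : Set (Fin n → ℝ)) (hΩ : IsOpen Ω)
    (σ : (Fin n → ℝ) → (Fin n → ℝ)) (hσC1 : ContDiffOn ℝ 1 σ Ω)
    (hmaps : Set.MapsTo σ Ω Ω) (hσinv : ∀ z ∈ Ω, σ (σ z) = z)
    (hmeas : ∀ A ⊆ Ω, MeasurableSet A → volume (σ '' A) = volume A)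
    (g : (Fin n → ℝ) → ℝ) (hg : IntegrableOn g Ω) :
    IntegrableOn (fun x => g (σ x)) Ω := by
  have hσinj : Set.InjOn σ Ω := fun a ha b hb hab => by
    have := congrArg σ hab; rwa [hσinv a ha, hσinv b hb] at this
  have himg : σ '' Ω = Ω := by
    apply Subset.antisymm
    · exact image_subset_iff.2 hmaps
    · intro w hw; exact ⟨σ w, hmaps hw, hσinv w hw⟩
  have hd : ∀ x ∈ Ω, HasFDerivWithinAt σ (fderiv ℝ σ x) Ω x := fun x hx =>
    (((hσC1.differentiableOn one_ne_zero).differentiableAt (hΩ.mem_nhds hx)).hasFDerivAt).hasFDerivWithinAt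
  have key := (integrableOn_image_iff_integrableOn_abs_det_fderiv_smul volume
    hΩ.measurableSet hd hσinj g)
  rw [himg] at key
  have h2 := key.1 hg
  apply h2.congr_fun _ hΩ.measurableSet
  intro x hx
  simp only []
  rw [absdet Ω hΩ σ hσC1 hσinj hmeas x hx, one_smul]

/-- The divergence is odd with respect to a measure preserving reversing involution. -/
theorem div_odd {m : ℕ} (Ω : Set (Fin (m+1) → ℝ)) (hΩ : IsOpen Ω)
    (F : (Fin (m+1) → ℝ) → (Fin (m+1) → ℝ)) (hF : ContDiffOn ℝ 1 F Ω)
    (σ : (Fin (m+1) → ℝ) → (Fin (m+1) → ℝ)) (hσC1 : ContDiffOn ℝ 1 σ Ω)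
    (hmaps : Set.MapsTo σ Ω Ω) (hσinv : ∀ z ∈ Ω, σ (σ z) = z)
    (hmeas : ∀ A ⊆ Ω, MeasurableSet A → volume (σ '' A) = volume A)
    (hFσ : ∀ x ∈ Ω, F (σ x) = -(fderiv ℝ σ x (F x))) :
    ∀ x ∈ Ω, (∑ i, fderiv ℝ F (σ x) (Pi.single i 1) i)
      + (∑ i, fderiv ℝ F x (Pi.single i 1) i) = 0 := by
  classical
  set D : (Fin (m+1) → ℝ) → ℝ := fun x => ∑ i, fderiv ℝ F x (Pi.single i 1) i with hD_def
  have hσinj : Set.InjOn σ Ω := fun a ha b hb hab => by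
    have := congrArg σ hab; rwa [hσinv a ha, hσinv b hb] at this
  have hσd : ∀ x ∈ Ω, HasFDerivAt σ (fderiv ℝ σ x) x := fun x hx =>
    ((hσC1.differentiableOn one_ne_zero).differentiableAt (hΩ.mem_nhds hx)).hasFDerivAt
  have hσcont : ContinuousOn σ Ω := hσC1.continuousOn
  have hFcont : ContinuousOn F Ω := hF.continuousOn
  have hDF : ContinuousOn (fderiv ℝ F) Ω := hF.continuousOn_fderiv_of_isOpen hΩ le_rfl
  have hDcont : ContinuousOn D Ω := by
    apply continuousOn_finset_sum
    intro i _
    have h5 : Continuous fun (L : (Fin (m+1) → ℝ) →L[ℝ] (Fin (m+1) → ℝ)) =>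
        L (Pi.single i 1 : Fin (m+1) → ℝ) :=
      (ContinuousLinearMap.apply ℝ (Fin (m+1) → ℝ)
        (Pi.single i 1 : Fin (m+1) → ℝ)).continuous
    have h4 : Continuous fun (L : (Fin (m+1) → ℝ) →L[ℝ] (Fin (m+1) → ℝ)) =>
        L (Pi.single i 1 : Fin (m+1) → ℝ) i := (continuous_apply i).comp h5
    exact h4.comp_continuousOn hDF
  have hk : ContinuousOn (fun x => D (σ x) + D x) Ω := by
    apply ContinuousOn.add _ hDcont
    exact hDcont.comp hσcont hmaps
  intro x₀ hx₀
  have := weak_zero Ω hΩ (fun x => D (σ x) + D x) hk ?_ x₀ hx₀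
  · exact this
  intro ψ hψsm hψcs hψsub hψnn
  -- notation
  set ψ' : (Fin (m+1) → ℝ) → ((Fin (m+1) → ℝ) →L[ℝ] ℝ) := fderiv ℝ ψ with hψ'_def
  have hψd : ∀ x, HasFDerivAt ψ (ψ' x) x := fun x =>
    ((hψsm.differentiable (by norm_num)).differentiableAt).hasFDerivAt
  have hψ'c : Continuous ψ' := (hψsm.fderiv_right (m := ∞) (by norm_num)).continuous
  have hψ0 : ∀ y ∉ tsupport ψ, ψ y = 0 := fun y hy => image_eq_zero_of_notMem_tsupport hy
  have hψ'0 : ∀ y ∉ tsupport ψ, ψ' y = 0 := by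
    intro y hy
    have h0 : HasFDerivAt ψ (0 : (Fin (m+1) → ℝ) →L[ℝ] ℝ) y := by
      apply (hasFDerivAt_const (0:ℝ) y).congr_of_eventuallyEq
      filter_upwards [(isClosed_tsupport ψ).isOpen_compl.mem_nhds hy] with w hw
      exact hψ0 w hw
    exact (hψd y).unique h0
  set K := tsupport ψ with hK_def
  set K' := σ '' K with hK'_def
  have hK'cpt : IsCompact K' := (hψcs.of_isClosed_subset (isClosed_tsupport ψ) le_rfl).image_of_continuousOn
    (hσcont.mono hψsub)
  have hK'sub : K' ⊆ Ω := by
    rintro _ ⟨y, hy, rfl⟩; exact hmaps (hψsub hy)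
  have hσout : ∀ y ∈ Ω, y ∉ K' → σ y ∉ K := by
    intro y hy hyK' hc
    exact hyK' ⟨σ y, hc, hσinv y hy⟩
  -- the transported test function χ
  set χ : (Fin (m+1) → ℝ) → ℝ := fun y => if y ∈ Ω then ψ (σ y) else 0 with hχ_def
  set χ' : (Fin (m+1) → ℝ) → ((Fin (m+1) → ℝ) →L[ℝ] ℝ) := fun y =>
    if y ∈ Ω then (ψ' (σ y)).comp (fderiv ℝ σ y) else 0 with hχ'_def
  have hχ0 : ∀ y ∉ K', χ y = 0 := by
    intro y hy
    by_cases hyΩ : y ∈ Ω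
    · simp [hχ_def, if_pos hyΩ, hψ0 _ (hσout y hyΩ hy)]
    · simp [hχ_def, if_neg hyΩ]
  have hχ'0 : ∀ y ∉ K', χ' y = 0 := by
    intro y hy
    by_cases hyΩ : y ∈ Ω
    · simp [hχ'_def, if_pos hyΩ, hψ'0 _ (hσout y hyΩ hy)]
    · simp [hχ'_def, if_neg hyΩ]
  have hχsupp : tsupport χ ⊆ K' := by
    apply closure_minimal _ hK'cpt.isClosed
    intro y hy
    by_contra hyc
    exact hy (hχ0 y hyc)
  have hχcpt : IsCompact (tsupport χ) := hK'cpt.of_isClosed_subset (isClosed_tsupport χ) hχsupp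
  have hχd : ∀ y, HasFDerivAt χ (χ' y) y := by
    intro y
    by_cases hy : y ∈ Ω
    · have h1 : HasFDerivAt (fun w => ψ (σ w)) ((ψ' (σ y)).comp (fderiv ℝ σ y)) y :=
        (hψd (σ y)).comp y (hσd y hy)
      have h2 : HasFDerivAt χ ((ψ' (σ y)).comp (fderiv ℝ σ y)) y := by
        apply h1.congr_of_eventuallyEq
        filter_upwards [hΩ.mem_nhds hy] with w hw
        simp [hχ_def, if_pos hw]
      simpa [hχ'_def, if_pos hy] using h2
    · have hy' : y ∉ K' := fun hc => hy (hK'sub hc)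
      have h2 : HasFDerivAt χ (0 : (Fin (m+1) → ℝ) →L[ℝ] ℝ) y := by
        apply (hasFDerivAt_const (0:ℝ) y).congr_of_eventuallyEq
        filter_upwards [hK'cpt.isClosed.isOpen_compl.mem_nhds hy'] with w hw
        exact hχ0 w hw
      simpa [hχ'_def, if_neg hy] using h2
  have hχ'c : Continuous χ' := by
    rw [continuous_iff_continuousAt]
    intro y
    by_cases hy : y ∈ Ω
    · have h1 : ContinuousAt (fun w => (ψ' (σ w)).comp (fderiv ℝ σ w)) y := by
        have hb : Continuous fun p : (((Fin (m+1) → ℝ) →L[ℝ] ℝ) × ((Fin (m+1) → ℝ) →L[ℝ] (Fin (m+1) → ℝ))) => p.1.comp p.2 :=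
          (isBoundedBilinearMap_comp (𝕜 := ℝ)
            (E := (Fin (m+1) → ℝ)) (F := (Fin (m+1) → ℝ)) (G := ℝ)).continuous
        have h1a : ContinuousAt (fun w => (ψ' (σ w), fderiv ℝ σ w)) y := by
          apply ContinuousAt.prodMk
          · exact hψ'c.continuousAt.comp ((hσcont.continuousAt (hΩ.mem_nhds hy)))
          · exact (hσC1.continuousOn_fderiv_of_isOpen hΩ le_rfl).continuousAt (hΩ.mem_nhds hy)
        exact hb.continuousAt.comp h1a
      apply h1.congr
      filter_upwards [hΩ.mem_nhds hy] with w hw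
      simp [hχ'_def, if_pos hw]
    · have hy' : y ∉ K' := fun hc => hy (hK'sub hc)
      apply continuousAt_const.congr
      have hev : (fun _ => (0 : (Fin (m+1) → ℝ) →L[ℝ] ℝ)) =ᶠ[nhds y] χ' := by
        filter_upwards [hK'cpt.isClosed.isOpen_compl.mem_nhds hy'] with w hw
        exact (hχ'0 w hw).symm
      exact hev
  -- the four integrands
  set u1 : (Fin (m+1) → ℝ) → ℝ := fun y => ψ y * D y with hu1_def
  set u2 : (Fin (m+1) → ℝ) → ℝ := fun y => ∑ i, F y i * ψ' y (Pi.single i 1) with hu2_def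
  set u3 : (Fin (m+1) → ℝ) → ℝ := fun y => χ y * D y with hu3_def
  set u4 : (Fin (m+1) → ℝ) → ℝ := fun y => ∑ i, F y i * χ' y (Pi.single i 1) with hu4_def
  have hcont_aux : ∀ (v : (Fin (m+1) → ℝ) → ℝ) (L : Set (Fin (m+1) → ℝ)),
      IsCompact L → L ⊆ Ω → ContinuousOn v Ω → (∀ y ∉ L, v y = 0) → Integrable v := by
    intro v L hL hLΩ hvc hv0
    have hc : Continuous v := by
      rw [continuous_iff_continuousAt]
      intro y
      by_cases hy : y ∈ Ω
      · exact hvc.continuousAt (hΩ.mem_nhds hy)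
      · have hy' : y ∉ L := fun hc => hy (hLΩ hc)
        apply continuousAt_const.congr
        have hev : (fun _ => (0:ℝ)) =ᶠ[nhds y] v := by
          filter_upwards [hL.isClosed.isOpen_compl.mem_nhds hy'] with w hw
          exact (hv0 w hw).symm
        exact hev
    exact hc.integrable_of_hasCompactSupport (HasCompactSupport.intro hL hv0)
  have hKsub : K ⊆ Ω := hψsub
  have hKcpt : IsCompact K := hψcs.of_isClosed_subset (isClosed_tsupport ψ) le_rfl
  have hu1i : Integrable u1 := by
    apply hcont_aux u1 K hKcpt hKsub
    · exact (continuous_iff_continuousAt.2 fun y => (hψd y).differentiableAt.continuousAt).continuousOn.mul hDcont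
    · intro y hy; simp [hu1_def, hψ0 y hy]
  have hu2i : Integrable u2 := by
    apply hcont_aux u2 K hKcpt hKsub
    · apply continuousOn_finset_sum
      intro i _
      apply ContinuousOn.mul
      · exact (continuous_apply i).comp_continuousOn hFcont
      · exact ((ContinuousLinearMap.apply ℝ ℝ (Pi.single i (1:ℝ))).continuous.comp hψ'c).continuousOn
    · intro y hy; simp [hu2_def, hψ'0 y hy]
  have hu3i : Integrable u3 := by
    apply hcont_aux u3 K' hK'cpt hK'sub
    · exact (continuous_iff_continuousAt.2 fun y => (hχd y).differentiableAt.continuousAt).continuousOn.mul hDcont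
    · intro y hy; simp [hu3_def, hχ0 y hy]
  have hu4i : Integrable u4 := by
    apply hcont_aux u4 K' hK'cpt hK'sub
    · apply continuousOn_finset_sum
      intro i _
      apply ContinuousOn.mul
      · exact (continuous_apply i).comp_continuousOn hFcont
      · exact ((ContinuousLinearMap.apply ℝ ℝ (Pi.single i (1:ℝ))).continuous.comp hχ'c).continuousOn
    · intro y hy; simp [hu4_def, hχ'0 y hy]
  -- the two ibp identities
  have hibp1 : (∫ y in Ω, u1 y) + (∫ y in Ω, u2 y) = 0 := by
    rw [← integral_add hu1i.integrableOn hu2i.integrableOn]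
    exact ibp Ω hΩ F hF ψ ψ' hψd hψ'c hKcpt hKsub
  have hibp2 : (∫ y in Ω, u3 y) + (∫ y in Ω, u4 y) = 0 := by
    rw [← integral_add hu3i.integrableOn hu4i.integrableOn]
    exact ibp Ω hΩ F hF χ χ' hχd hχ'c hχcpt (hχsupp.trans hK'sub)
  -- u4 = -(u2 ∘ σ) on Ω
  have hu4σ : ∀ y ∈ Ω, u4 y = -(u2 (σ y)) := by
    intro y hy
    have h1 : u4 y = ((ψ' (σ y)).comp (fderiv ℝ σ y)) (F y) := by
      rw [hu4_def]
      simp only [hχ'_def, if_pos hy]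
      exact sum_mul_apply _ _
    have h2 : u2 (σ y) = ψ' (σ y) (F (σ y)) := sum_mul_apply _ _
    rw [h1, h2, ContinuousLinearMap.comp_apply]
    have h3 : fderiv ℝ σ y (F y) = -(F (σ y)) := by
      rw [hFσ y hy]; ring_nf
    rw [h3, map_neg]
  -- ∫ u4 = -∫ u2 via change of variables
  have hcovu2 : ∫ y in Ω, u2 (σ y) = ∫ y in Ω, u2 y :=
    cov Ω hΩ σ hσC1 hmaps hσinv hmeas u2
  have hintu4 : ∫ y in Ω, u4 y = -∫ y in Ω, u2 y := by
    have : ∫ y in Ω, u4 y = ∫ y in Ω, -(u2 (σ y)) := by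
      apply setIntegral_congr_fun hΩ.measurableSet
      intro y hy
      exact hu4σ y hy
    rw [this, integral_neg, hcovu2]
  -- ∫ (ψ ∘ id) * (D σ) = ∫ u3 via change of variables
  have hu3σ : ∀ y ∈ Ω, u3 (σ y) = ψ y * D (σ y) := by
    intro y hy
    have : χ (σ y) = ψ y := by
      simp [hχ_def, if_pos (hmaps hy), hσinv y hy]
    rw [hu3_def]
    simp only []
    rw [this]
  have hcovu3 : ∫ y in Ω, u3 (σ y) = ∫ y in Ω, u3 y :=
    cov Ω hΩ σ hσC1 hmaps hσinv hmeas u3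
  have hint1 : ∫ y in Ω, ψ y * D (σ y) = ∫ y in Ω, u3 y := by
    rw [← hcovu3]
    apply setIntegral_congr_fun hΩ.measurableSet
    intro y hy
    exact (hu3σ y hy).symm
  -- integrability of ψ * (D ∘ σ)
  have hDσi : IntegrableOn (fun y => u3 (σ y)) Ω :=
    cov_int Ω hΩ σ hσC1 hmaps hσinv hmeas u3 hu3i.integrableOn
  have hψDσi : IntegrableOn (fun y => ψ y * D (σ y)) Ω := by
    apply hDσi.congr_fun _ hΩ.measurableSet
    intro y hy
    exact (hu3σ y hy)
  -- final assembly
  have : ∫ y in Ω, ψ y * (D (σ y) + D y) =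
      (∫ y in Ω, ψ y * D (σ y)) + ∫ y in Ω, u1 y := by
    rw [← integral_add hψDσi hu1i.integrableOn]
    apply setIntegral_congr_fun hΩ.measurableSet
    intro y hy
    simp [hu1_def]; ring
  rw [this, hint1]
  have h5 : ∫ y in Ω, u3 y = -∫ y in Ω, u4 y := by linarith
  rw [h5, hintu4]
  linarith

/-- If σ is a measure-preserving reversibility and γ is a σ-invariant cycle
containing a point z with σ(z) ≠ z, then γ contains at least two distinct
zero-divergence points. -/
theorem cycle_contains_two_zero_divergence_points {n : ℕ}
    (Ω : Set (Fin n → ℝ)) (hΩ : IsOpen Ω) (hconn : IsConnected Ω)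
    (F : (Fin n → ℝ) → (Fin n → ℝ)) (hF : ContDiffOn ℝ 1 F Ω)
    (φ : ℝ → (Fin n → ℝ) → (Fin n → ℝ))
    (hmem : ∀ (t : ℝ), ∀ z ∈ Ω, φ t z ∈ Ω)
    (hφ0 : ∀ z ∈ Ω, φ 0 z = z)
    (hgroup : ∀ (s t : ℝ), ∀ z ∈ Ω, φ (s + t) z = φ s (φ t z))
    (hderiv : ∀ z ∈ Ω, ∀ t : ℝ, HasDerivAt (fun u => φ u z) (F (φ t z)) t)
    (σ : (Fin n → ℝ) → (Fin n → ℝ)) (hσC1 : ContDiffOn ℝ 1 σ Ω)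
    (hmaps : Set.MapsTo σ Ω Ω) (hσinv : ∀ z ∈ Ω, σ (σ z) = z)
    (hrev : ∀ (t : ℝ), ∀ z ∈ Ω, φ t (σ z) = σ (φ (-t) z))
    (hmeas : ∀ A ⊆ Ω, MeasurableSet A → volume (σ '' A) = volume A)
    (z : Fin n → ℝ) (hz : z ∈ Ω) (T : ℝ) (hT : 0 < T)
    (hper : φ T z = z)
    (γ : Set (Fin n → ℝ)) (hγ : γ = Set.range fun t => φ t z)
    (hγinv : σ '' γ = γ) (hzne : σ z ≠ z) :
    ∃ p₁ ∈ γ, ∃ p₂ ∈ γ, p₁ ≠ p₂ ∧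
      (∑ i : Fin n, fderiv ℝ F p₁ (Pi.single i 1) i = 0) ∧
      (∑ i : Fin n, fderiv ℝ F p₂ (Pi.single i 1) i = 0) := by
  cases n with
  | zero =>
    exact absurd (Subsingleton.elim (σ z) z) hzne
  | succ m =>
    -- F ∘ σ = - Dσ · F
    have hFσ : ∀ x ∈ Ω, F (σ x) = -(fderiv ℝ σ x (F x)) := by
      intro x hx
      have hσx : σ x ∈ Ω := hmaps hx
      have h1 : HasDerivAt (fun t => φ t (σ x)) (F (σ x)) 0 := by
        have := hderiv (σ x) hσx 0
        rwa [hφ0 (σ x) hσx] at this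
      have h3 : HasDerivAt (fun t : ℝ => -t) (-1 : ℝ) 0 := by
        exact hasDerivAt_neg' 0
      have h2 : HasDerivAt (fun u => φ u x) (F x) ((fun t : ℝ => -t) 0) := by
        simpa [hφ0 x hx] using hderiv x hx 0
      have hφneg : HasDerivAt (fun t : ℝ => φ (-t) x) (-(F x)) 0 := by
        simpa [Function.comp_def] using h2.scomp 0 h3
      have hσder : HasFDerivAt σ (fderiv ℝ σ x) ((fun t : ℝ => φ (-t) x) 0) := by
        simp only [neg_zero, hφ0 x hx]
        exact ((hσC1.differentiableOn one_ne_zero).differentiableAt (hΩ.mem_nhds hx)).hasFDerivAt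
      have h4 : HasDerivAt (fun t : ℝ => σ (φ (-t) x)) (fderiv ℝ σ x (-(F x))) 0 :=
        hσder.comp_hasDerivAt 0 hφneg
      have heq : (fun t : ℝ => φ t (σ x)) = fun t : ℝ => σ (φ (-t) x) :=
        funext fun t => hrev t x hx
      rw [heq] at h1
      have h5 := h4.unique h1
      rw [map_neg] at h5
      exact h5.symm
    have hodd := div_odd Ω hΩ F hF σ hσC1 hmaps hσinv hmeas hFσ
    -- the curve
    set c : ℝ → (Fin (m+1) → ℝ) := fun t => φ t z with hc_def
    have hcmem : ∀ t, c t ∈ Ω := fun t => hmem t z hz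
    have hccont : Continuous c := continuous_iff_continuousAt.2
      fun t => (hderiv z hz t).differentiableAt.continuousAt
    have hzγ : z ∈ γ := by rw [hγ]; exact ⟨0, hφ0 z hz⟩
    have hσzγ : σ z ∈ γ := by
      rw [← hγinv]; exact ⟨z, hzγ, rfl⟩
    obtain ⟨t₀, ht₀⟩ : ∃ t₀, c t₀ = σ z := by
      rw [hγ] at hσzγ; exact hσzγ
    -- σ reflects the curve
    have hσφ : ∀ s, σ (c s) = c (t₀ - s) := by
      intro s
      have h1 := hrev (-s) z hz
      rw [neg_neg] at h1
      -- h1 : φ (-s) (σ z) = σ (φ s z)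
      rw [← ht₀] at h1
      have h2 := hgroup (-s) t₀ z hz
      rw [show -s + t₀ = t₀ - s by ring] at h2
      rw [← h2] at h1
      exact h1.symm
    set D : (Fin (m+1) → ℝ) → ℝ := fun x => ∑ i, fderiv ℝ F x (Pi.single i 1) i with hD_def
    have hanti : ∀ s, D (c (t₀ - s)) + D (c s) = 0 := by
      intro s
      have := hodd (c s) (hcmem s)
      rwa [hσφ s] at this
    -- period subgroup
    set P : AddSubgroup ℝ :=
      { carrier := {t : ℝ | φ t z = z}
        zero_mem' := hφ0 z hz
        add_mem' := by
          intro s t hs ht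
          simp only [Set.mem_setOf_eq] at *
          rw [hgroup s t z hz, ht, hs]
        neg_mem' := by
          intro t ht
          simp only [Set.mem_setOf_eq] at *
          have h := hgroup (-t) t z hz
          rw [ht, neg_add_cancel, hφ0 z hz] at h
          exact h.symm } with hP_def
    have hPmem : ∀ t, t ∈ P ↔ φ t z = z := fun t => Iff.rfl
    have hPT : T ∈ P := hper
    rcases AddSubgroup.dense_or_cyclic P with hdense | ⟨a, ha⟩
    · -- dense case: P closed, so P = ℝ, so γ = {z}, contradiction
      exfalso
      have hPc : IsClosed (P : Set ℝ) := isClosed_eq (by exact hccont) continuous_const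
      have huniv : (P : Set ℝ) = Set.univ := hPc.closure_eq ▸ hdense.closure_eq
      have ht₀P : t₀ ∈ P := Set.eq_univ_iff_forall.mp huniv t₀
      have : σ z = z := by rw [← ht₀]; exact ht₀P
      exact hzne this
    · -- cyclic case
      have hamem : a ∈ P := by
        rw [ha]; exact AddSubgroup.subset_closure rfl
      have hmemP : ∀ t, t ∈ P ↔ ∃ k : ℤ, k • a = t := by
        intro t; rw [ha]; exact AddSubgroup.mem_closure_singleton
      have ha0 : a ≠ 0 := by
        intro h0
        obtain ⟨k, hk⟩ := (hmemP T).1 hPT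
        rw [h0] at hk
        simp at hk
        exact hT.ne' hk.symm
      set s₁ : ℝ := t₀/2 with hs₁_def
      set s₂ : ℝ := t₀/2 + a/2 with hs₂_def
      have hg1 : D (c s₁) = 0 := by
        have := hanti s₁
        rw [show t₀ - s₁ = s₁ by rw [hs₁_def]; ring] at this
        linarith
      have hca : φ (-a) z = z := P.neg_mem hamem
      have hrw : c (s₂ - a) = c s₂ := by
        have h2 := hgroup s₂ (-a) z hz
        rw [hca] at h2
        show φ (s₂ - a) z = φ s₂ z
        rw [show s₂ - a = s₂ + -a by ring]
        exact h2
      have hg2 : D (c s₂) = 0 := by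
        have h3 := hanti s₂
        rw [show t₀ - s₂ = s₂ - a by rw [hs₂_def]; ring, hrw] at h3
        linarith
      have hne : c s₁ ≠ c s₂ := by
        intro he
        have h7 : φ (-s₁ + s₂) z = φ (-s₁ + s₁) z := by
          rw [hgroup (-s₁) s₂ z hz, hgroup (-s₁) s₁ z hz]
          show φ (-s₁) (c s₂) = φ (-s₁) (c s₁)
          rw [he]
        rw [show -s₁ + s₂ = a/2 by rw [hs₁_def, hs₂_def]; ring,
          neg_add_cancel, hφ0 z hz] at h7
        have hhalf : a/2 ∈ P := h7
        obtain ⟨k, hk⟩ := (hmemP (a/2)).1 hhalf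
        have hk' : (k : ℝ) * a = a / 2 := by rw [← hk]; simp [zsmul_eq_mul]
        have h2k : ((2*k : ℤ) : ℝ) = ((1 : ℤ) : ℝ) := by
          push_cast
          have : a * (2 * (k:ℝ) - 1) = 0 := by linarith
          rcases mul_eq_zero.1 this with h | h
          · exact absurd h ha0
          · linarith
        have := Int.cast_injective (α := ℝ) h2k
        omega
      refine ⟨c s₁, ?_, c s₂, ?_, hne, hg1, hg2⟩
      · rw [hγ]; exact ⟨s₁, rfl⟩
      · rw [hγ]; exact ⟨s₂, rfl⟩
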